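/- Let U be a finite subset of the lattice sℤ^d and ∂U its outer boundary (lattice points not in U whose cube Q_s(J') shares boundary with the cube of some J ∈ U). If E(U) := ⋃_{J∈U} Q_s(J), then there exist dimensional constants C such that C^{-1} #(∂U) s^{d-1} ≤ Per(E(U)) ≤ C #(∂U) s^{d-1}. -/

import Mathlib

open Real Set MeasureTheory
open scoped NNReal ENNReal

/-- The closed cube of side `s` centered at `J` in `ℝ^d`. -/
def latticeCube (d : ℕ) (s : ℝ) (J : EuclideanSpace ℝ (Fin d)) :
    Set (EuclideanSpace ℝ (Fin d)) :=
  {y | ∀ i, |y i - J i| ≤ s / 2}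

namespace PerimProof

variable {d : ℕ} {s : ℝ}

lemma dist_coord_le (i : Fin d) (x y : EuclideanSpace ℝ (Fin d)) : |x i - y i| ≤ dist x y := by
  rw [EuclideanSpace.dist_eq, show |x i - y i| = Real.sqrt (dist (x i) (y i) ^2) by
    rw [Real.sqrt_sq dist_nonneg, Real.dist_eq]]
  exact Real.sqrt_le_sqrt <| Finset.single_le_sum
    (f := fun j => dist (x j) (y j) ^ 2) (fun j _ => sq_nonneg _) (Finset.mem_univ i)

lemma cont_coord (i : Fin d) : Continuous (fun y : EuclideanSpace ℝ (Fin d) => y i) :=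
  PiLp.continuous_apply 2 _ i

lemma lc_closed (J : EuclideanSpace ℝ (Fin d)) : IsClosed (latticeCube d s J) := by
  have : latticeCube d s J = ⋂ i, (fun y : EuclideanSpace ℝ (Fin d) => |y i - J i|) ⁻¹' (Iic (s/2)) := by
    ext y; simp [latticeCube]
  rw [this]
  exact isClosed_iInter fun i => IsClosed.preimage (by
    exact (Continuous.sub (cont_coord i) continuous_const).abs) isClosed_Iic

lemma lc_interior (J y : EuclideanSpace ℝ (Fin d)) (h : ∀ i, |y i - J i| < s/2) :
    y ∈ interior (latticeCube d s J) := by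
  apply mem_interior.2
  refine ⟨⋂ i, (fun y : EuclideanSpace ℝ (Fin d) => |y i - J i|) ⁻¹' (Iio (s/2)), ?_, ?_, ?_⟩
  · intro z hz i
    simp only [mem_iInter, mem_preimage, mem_Iio] at hz
    exact (hz i).le
  · exact isOpen_iInter_of_finite fun i => IsOpen.preimage
      ((Continuous.sub (cont_coord i) continuous_const).abs) isOpen_Iio
  · simp only [mem_iInter, mem_preimage, mem_Iio]; exact h

end PerimProof

namespace PerimProof
variable {d : ℕ} {s : ℝ}

lemma single_add_apply (z : EuclideanSpace ℝ (Fin d)) (i j : Fin d) (c : ℝ) :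
    (z + c • EuclideanSpace.single i (1:ℝ)) j = z j + (if j = i then c else 0) := by
  have : (c • EuclideanSpace.single i (1:ℝ)) j = if j = i then c else 0 := by
    rw [PiLp.smul_apply, EuclideanSpace.single_apply]
    split <;> simp
  rw [PiLp.add_apply, this]

lemma dist_single_add (z : EuclideanSpace ℝ (Fin d)) (i : Fin d) (c : ℝ) :
    dist (z + c • EuclideanSpace.single i (1:ℝ)) z = |c| := by
  rw [dist_self_add_left]
  rw [norm_smul, EuclideanSpace.norm_single]
  simp [Real.norm_eq_abs]

lemma lc_interior_subset (hs : 0 < s) (K : EuclideanSpace ℝ (Fin d)) :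
    interior (latticeCube d s K) ⊆ {y | ∀ i, |y i - K i| < s / 2} := by
  intro z hz i
  have hzK : z ∈ latticeCube d s K := interior_subset hz
  rcases Metric.mem_nhds_iff.1 (mem_interior_iff_mem_nhds.1 hz) with ⟨r, hr, hball⟩
  rcases lt_or_eq_of_le (hzK i) with h | h
  · exact h
  · exfalso
    set t := min (r/2) (s/2) with ht
    have ht0 : 0 < t := lt_min (by linarith) (by linarith)
    have htr : t < r := lt_of_le_of_lt (min_le_left _ _) (by linarith)
    rcases abs_eq (by linarith : (0:ℝ) ≤ s/2) |>.1 h with h1 | h1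
    · have hz' : z + t • EuclideanSpace.single i (1:ℝ) ∈ latticeCube d s K := by
        apply hball; rw [Metric.mem_ball, dist_single_add]; rw [abs_of_pos ht0]; exact htr
      have h2 := hz' i
      rw [single_add_apply] at h2
      simp only [if_pos] at h2
      rw [abs_le] at h2
      linarith [h2.2]
    · have hz' : z + (-t) • EuclideanSpace.single i (1:ℝ) ∈ latticeCube d s K := by
        apply hball; rw [Metric.mem_ball, dist_single_add]; rw [abs_neg, abs_of_pos ht0]; exact htr
      have h2 := hz' i
      rw [single_add_apply] at h2
      simp only [if_pos] at h2
      rw [abs_le] at h2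
      linarith [h2.1]

lemma lat_coord_eq (hs : 0 < s) {a b : ℝ} (ha : ∃ k : ℤ, a = k * s) (hb : ∃ k : ℤ, b = k * s)
    (h : |a - b| < s) : a = b := by
  rcases ha with ⟨k, rfl⟩; rcases hb with ⟨m, rfl⟩
  rw [← sub_mul, abs_mul, abs_of_pos hs] at h
  have h2 : |((k - m : ℤ) : ℝ)| < 1 := by
    push_cast
    exact (mul_lt_mul_iff_left₀ hs).1 (by rw [one_mul]; exact h)
  have h3 : |k - m| < 1 := by exact_mod_cast h2
  rw [abs_lt] at h3
  have : k = m := by omega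
  rw [this]

lemma funext_eucl {J K : EuclideanSpace ℝ (Fin d)} (h : ∀ i, J i = K i) : J = K := (WithLp.ext_iff 2).2 (funext h)

lemma lc_disjoint_interior (hs : 0 < s) {J K : EuclideanSpace ℝ (Fin d)}
    (hJ : ∀ i, ∃ k : ℤ, J i = k * s) (hK : ∀ i, ∃ k : ℤ, K i = k * s) (hne : J ≠ K) :
    latticeCube d s J ∩ interior (latticeCube d s K) = ∅ := by
  rw [eq_empty_iff_forall_notMem]
  rintro y ⟨hy1, hy2⟩
  apply hne
  apply funext_eucl
  intro i
  have h1 := hy1 i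
  have h2 := lc_interior_subset hs K hy2 i
  apply lat_coord_eq hs (hJ i) (hK i)
  calc |J i - K i| = |(J i - y i) + (y i - K i)| := by ring_nf
    _ ≤ |J i - y i| + |y i - K i| := abs_add_le _ _
    _ < s/2 + s/2 := by rw [abs_sub_comm]; exact add_lt_add_of_le_of_lt h1 h2
    _ = s := by ring

/-- nearest lattice point -/
noncomputable def np (s : ℝ) (y : EuclideanSpace ℝ (Fin d)) : EuclideanSpace ℝ (Fin d) :=
  WithLp.toLp 2 (fun i => (round (y i / s) : ℤ) * s)

lemma np_lat (y : EuclideanSpace ℝ (Fin d)) (i : Fin d) : ∃ k : ℤ, np s y i = k * s :=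
  ⟨round (y i / s), rfl⟩

lemma np_close (hs : 0 < s) (y : EuclideanSpace ℝ (Fin d)) (i : Fin d) :
    |y i - np s y i| ≤ s / 2 := by
  have h1 := abs_sub_round (y i / s)
  have h0 : y i - np s y i = (y i / s - round (y i / s)) * s := by
    have : np s y i = (round (y i / s) : ℝ) * s := rfl
    rw [this]
    field_simp
  rw [h0, abs_mul, abs_of_pos hs]
  calc |y i / s - ↑(round (y i / s))| * s ≤ (1/2) * s := by
        apply mul_le_mul_of_nonneg_right h1 hs.le
    _ = s / 2 := by ring

lemma np_mem (hs : 0 < s) (y : EuclideanSpace ℝ (Fin d)) : y ∈ latticeCube d s (np s y) :=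
  fun i => np_close hs y i

end PerimProof

namespace PerimProof
variable {d : ℕ} {s : ℝ}

lemma exists_outside_cube (hd : 0 < d) (hs : 0 < s) (U : Finset (EuclideanSpace ℝ (Fin d)))
    {x : EuclideanSpace ℝ (Fin d)}
    (hxE : x ∉ interior (⋃ J ∈ U, latticeCube d s J)) :
    ∃ K : EuclideanSpace ℝ (Fin d), (∀ i, ∃ k : ℤ, K i = k * s) ∧ K ∉ U ∧
      x ∈ latticeCube d s K := by
  classical
  set E := ⋃ J ∈ U, latticeCube d s J with hE
  -- candidate finite set
  set F : (Fin d → Fin 3) → EuclideanSpace ℝ (Fin d) :=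
    fun v => WithLp.toLp 2 (fun i => ((⌊x i / s⌋ + (v i : ℤ) - 1 : ℤ) : ℝ) * s) with hF
  set S : Finset (EuclideanSpace ℝ (Fin d)) := Finset.image F Finset.univ with hS
  have hSmem : ∀ K : EuclideanSpace ℝ (Fin d), (∀ i, ∃ k : ℤ, K i = k * s) →
      (∀ i, |x i - K i| ≤ s) → K ∈ S := by
    intro K hlat hcl
    choose k hk using hlat
    have hb : ∀ i, ⌊x i / s⌋ - 1 ≤ k i ∧ k i ≤ ⌊x i / s⌋ + 1 := by
      intro i
      have h1 := hcl i
      rw [hk i, abs_le] at h1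
      have hlow : (k i : ℝ) - 1 ≤ x i / s := by
        rw [le_div_iff₀ hs]; linarith [h1.2]
      have hhigh : x i / s ≤ (k i : ℝ) + 1 := by
        rw [div_le_iff₀ hs]; linarith [h1.1]
      constructor
      · have : (⌊x i / s⌋ : ℤ) ≤ k i + 1 := by
          have := Int.floor_le_floor (R := ℝ) hhigh
          rwa [show ((k i : ℝ) + 1) = ((k i + 1 : ℤ) : ℝ) by push_cast; ring,
            Int.floor_intCast] at this
        omega
      · have : k i - 1 ≤ ⌊x i / s⌋ := by
          rw [Int.le_floor]; push_cast; linarith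
        omega
    refine Finset.mem_image.2 ⟨fun i => ⟨(k i - ⌊x i / s⌋ + 1).toNat, by have := hb i; omega⟩, Finset.mem_univ _, ?_⟩
    apply funext_eucl
    intro i
    show ((⌊x i / s⌋ + ((k i - ⌊x i / s⌋ + 1).toNat : ℤ) - 1 : ℤ) : ℝ) * s = K i
    rw [hk i]
    congr 1
    push_cast [Int.toNat_of_nonneg (by have := hb i; omega : (0:ℤ) ≤ k i - ⌊x i / s⌋ + 1)]
    ring
  set P : Finset (EuclideanSpace ℝ (Fin d)) := S.filter (fun K => K ∉ U) with hP
  -- key step: for every positive δ ≤ s/2 there is K ∈ P close to x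
  have step : ∀ δ : ℝ, 0 < δ → δ ≤ s / 2 → ∃ K ∈ P, ∀ i, |x i - K i| < s / 2 + δ := by
    intro δ hδ hδs
    have hnb : ¬ Metric.ball x δ ⊆ E := by
      intro hsub
      exact hxE (mem_interior.2 ⟨Metric.ball x δ, hsub, Metric.isOpen_ball, Metric.mem_ball_self hδ⟩)
    rw [Set.not_subset] at hnb
    obtain ⟨y, hy, hyE⟩ := hnb
    set K := np s y with hK
    have hKlat := np_lat (s := s) y
    have hyK : y ∈ latticeCube d s K := np_mem hs y
    have hKU : K ∉ U := fun hKU => hyE (mem_biUnion hKU hyK)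
    have hclose : ∀ i, |x i - K i| < s / 2 + δ := by
      intro i
      calc |x i - K i| ≤ |x i - y i| + |y i - K i| := by
            rw [show x i - K i = (x i - y i) + (y i - K i) by ring]; exact abs_add_le _ _
        _ < δ + s / 2 := by
            apply add_lt_add_of_lt_of_le _ (hyK i)
            exact lt_of_le_of_lt (dist_coord_le i x y) (by rwa [dist_comm, ← Metric.mem_ball])
        _ = s / 2 + δ := by ring
    refine ⟨K, Finset.mem_filter.2 ⟨hSmem K hKlat (fun i => (hclose i).le.trans (by linarith)), hKU⟩, hclose⟩
  by_contra hno
  push_neg at hno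
  have hno' : ∀ K ∈ P, ∃ i, s / 2 < |x i - K i| := by
    intro K hKP
    rcases Finset.mem_filter.1 hKP with ⟨hKS, hKU⟩
    have hlat : ∀ i, ∃ k : ℤ, K i = k * s := by
      rcases Finset.mem_image.1 hKS with ⟨v, _, rfl⟩
      exact fun i => ⟨_, rfl⟩
    have := hno K hlat hKU
    simp only [latticeCube, mem_setOf_eq, not_forall, not_le] at this
    exact this
  have hPne : P.Nonempty := by
    obtain ⟨K, hKP, _⟩ := step (s/2) (by linarith) le_rfl
    exact ⟨K, hKP⟩
  have hine : Nonempty (Fin d) := ⟨⟨0, hd⟩⟩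
  have hεpos : 0 < P.inf' hPne (fun K => Finset.univ.sup' Finset.univ_nonempty fun i => |x i - K i|) - s / 2 := by
    rw [sub_pos, Finset.lt_inf'_iff]
    intro K hKP
    obtain ⟨i, hi⟩ := hno' K hKP
    exact lt_of_lt_of_le hi (Finset.le_sup' (fun i => |x i - K i|) (Finset.mem_univ i))
  obtain ⟨K, hKP, hKcl⟩ := step
    (min (P.inf' hPne (fun K => Finset.univ.sup' Finset.univ_nonempty fun i => |x i - K i|) - s / 2) (s/2))
    (lt_min hεpos (by linarith)) (min_le_right _ _)
  have h1 : P.inf' hPne (fun K => Finset.univ.sup' Finset.univ_nonempty fun i => |x i - K i|)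
      ≤ Finset.univ.sup' Finset.univ_nonempty fun i => |x i - K i| :=
    Finset.inf'_le _ hKP
  have h2 : (Finset.univ.sup' Finset.univ_nonempty fun i => |x i - K i|)
      < s / 2 + min (P.inf' hPne (fun K => Finset.univ.sup' Finset.univ_nonempty fun i => |x i - K i|) - s / 2) (s/2) := by
    rw [Finset.sup'_lt_iff]
    exact fun i _ => hKcl i
  have h3 := min_le_left (P.inf' hPne (fun K => Finset.univ.sup' Finset.univ_nonempty fun i => |x i - K i|) - s / 2) (s/2)
  linarith

end PerimProof

namespace PerimProof
variable {d : ℕ} {s : ℝ}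

lemma frontier_subset_B (hd : 0 < d) (hs : 0 < s) (U B : Finset (EuclideanSpace ℝ (Fin d)))
    (hU : ∀ J ∈ U, ∀ i, ∃ k : ℤ, J i = k * s)
    (hB : ∀ J, J ∈ B ↔ ((∀ i, ∃ k : ℤ, J i = k * s) ∧ J ∉ U ∧
      ∃ J' ∈ U, (frontier (latticeCube d s J') ∩ frontier (latticeCube d s J)).Nonempty)) :
    frontier (⋃ J ∈ U, latticeCube d s J) ⊆ ⋃ K ∈ B, frontier (latticeCube d s K) := by
  intro x hx
  set E := ⋃ J ∈ U, latticeCube d s J with hE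
  have hEclosed : IsClosed E := (U.finite_toSet.isClosed_biUnion (fun J _ => lc_closed J))
  have hxcl : x ∈ E := hEclosed.closure_eq ▸ (frontier_subset_closure hx)
  have hxint : x ∉ interior E := by
    rw [frontier, mem_diff] at hx; exact hx.2
  obtain ⟨J, hJU, hxJ⟩ := mem_iUnion₂.1 hxcl
  obtain ⟨K, hKlat, hKU, hxK⟩ := exists_outside_cube hd hs U hxint
  have hne : J ≠ K := fun h => hKU (h ▸ hJU)
  have hxfK : x ∈ frontier (latticeCube d s K) := by
    rw [frontier, mem_diff, (lc_closed K).closure_eq]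
    refine ⟨hxK, fun hint => ?_⟩
    have := lc_disjoint_interior hs (hU J hJU) hKlat hne
    exact absurd (mem_inter hxJ hint) (by rw [this]; exact notMem_empty x)
  have hxfJ : x ∈ frontier (latticeCube d s J) := by
    rw [frontier, mem_diff, (lc_closed J).closure_eq]
    refine ⟨hxJ, fun hint => ?_⟩
    have hsub : interior (latticeCube d s J) ⊆ interior E :=
      interior_mono (fun y hy => mem_biUnion hJU hy)
    exact hxint (hsub hint)
  have hKB : K ∈ B := (hB K).2 ⟨hKlat, hKU, ⟨J, hJU, ⟨x, hxfJ, hxfK⟩⟩⟩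
  exact mem_biUnion hKB hxfK

end PerimProof

namespace PerimProof
variable {d : ℕ} {s : ℝ}

def sgn (e : Bool) : ℝ := if e then 1 else -1

lemma sgn_cases (e : Bool) : sgn e = 1 ∨ sgn e = -1 := by
  cases e <;> simp [sgn]

lemma abs_sgn (e : Bool) : |sgn e| = 1 := by
  rcases sgn_cases e with h | h <;> rw [h] <;> simp

def nb (s : ℝ) (A : EuclideanSpace ℝ (Fin d)) (t : Fin d) (e : Bool) :
    EuclideanSpace ℝ (Fin d) :=
  WithLp.toLp 2 (fun i => if i = t then A i + sgn e * s else A i)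

lemma nb_lat (hA : ∀ i, ∃ k : ℤ, A i = k * s) (t : Fin d) (e : Bool) :
    ∀ i, ∃ k : ℤ, nb s A t e i = k * s := by
  intro i
  obtain ⟨k, hk⟩ := hA i
  by_cases h : i = t
  · rcases sgn_cases e with he | he
    · exact ⟨k + 1, by show (if i = t then A i + sgn e * s else A i) = _; rw [if_pos h, hk, he]; push_cast; ring⟩
    · exact ⟨k - 1, by show (if i = t then A i + sgn e * s else A i) = _; rw [if_pos h, hk, he]; push_cast; ring⟩
  · exact ⟨k, by show (if i = t then A i + sgn e * s else A i) = _; rw [if_neg h, hk]⟩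

def openFace (s : ℝ) (A : EuclideanSpace ℝ (Fin d)) (t : Fin d) (e : Bool) :
    Set (EuclideanSpace ℝ (Fin d)) :=
  {y | y t = A t + sgn e * (s/2) ∧ ∀ j, j ≠ t → |y j - A j| < s/2}

def closedFace (s : ℝ) (A : EuclideanSpace ℝ (Fin d)) (t : Fin d) (e : Bool) :
    Set (EuclideanSpace ℝ (Fin d)) :=
  {y | y t = A t + sgn e * (s/2) ∧ ∀ j, |y j - A j| ≤ s/2}

lemma openFace_subset_cube (hs : 0 < s) (A : EuclideanSpace ℝ (Fin d)) (t : Fin d) (e : Bool) :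
    openFace s A t e ⊆ latticeCube d s A := by
  rintro y ⟨h1, h2⟩ i
  by_cases h : i = t
  · subst h; rw [h1]; rw [add_sub_cancel_left, abs_mul, abs_sgn, one_mul]
    rw [abs_of_pos (by linarith)]
  · exact (h2 i h).le

lemma int_eq_one (hs : 0 < s) (m : ℤ) (h1 : 0 < (m : ℝ) * s) (h2 : (m : ℝ) * s < 2 * s) :
    m = 1 := by
  have hm1 : 0 < (m : ℝ) := by
    by_contra h
    push_neg at h
    nlinarith
  have hm2 : (m : ℝ) < 2 := by
    have := (mul_lt_mul_iff_left₀ hs).1 h2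
    linarith
  have : 0 < m := by exact_mod_cast hm1
  have : m < 2 := by exact_mod_cast hm2
  omega

end PerimProof

namespace PerimProof
variable {d : ℕ} {s : ℝ}

lemma openFace_subset_frontier (hs : 0 < s) (U : Finset (EuclideanSpace ℝ (Fin d)))
    (hU : ∀ J ∈ U, ∀ i, ∃ k : ℤ, J i = k * s)
    {A : EuclideanSpace ℝ (Fin d)} {t : Fin d} {e : Bool}
    (hAU : A ∈ U) (hnb : nb s A t e ∉ U) :
    openFace s A t e ⊆ frontier (⋃ J ∈ U, latticeCube d s J) := by
  intro x hx
  set E := ⋃ J ∈ U, latticeCube d s J with hE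
  have hxE : x ∈ E := mem_biUnion hAU (openFace_subset_cube hs A t e hx)
  rw [frontier, mem_diff]
  refine ⟨subset_closure hxE, fun hint => ?_⟩
  rcases Metric.mem_nhds_iff.1 (mem_interior_iff_mem_nhds.1 hint) with ⟨r, hr, hball⟩
  set δ := min (r/2) (s/2) with hδ
  have hδ0 : 0 < δ := lt_min (by linarith) (by linarith)
  have hδr : δ < r := lt_of_le_of_lt (min_le_left _ _) (by linarith)
  have hδs : δ ≤ s/2 := min_le_right _ _
  set y := x + (sgn e * δ) • EuclideanSpace.single t (1:ℝ) with hy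
  have hyE : y ∈ E := by
    apply hball
    rw [Metric.mem_ball, hy, dist_single_add, abs_mul, abs_sgn, one_mul, abs_of_pos hδ0]
    exact hδr
  obtain ⟨J, hJU, hyJ⟩ := mem_iUnion₂.1 hyE
  have hJlat := hU J hJU
  have hAlat := hU A hAU
  -- show J = nb s A t e
  have hJeq : J = nb s A t e := by
    apply funext_eucl
    intro j
    by_cases hj : j = t
    · subst hj
      -- coordinate j = t
      have hyj : y j = A j + sgn e * (s/2 + δ) := by
        rw [hy, single_add_apply, if_pos rfl, hx.1]; ring
      have h1 : |y j - J j| ≤ s/2 := hyJ j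
      obtain ⟨kJ, hkJ⟩ := hJlat j
      obtain ⟨kA, hkA⟩ := hAlat j
      have hm : J j - A j = ((kJ - kA : ℤ) : ℝ) * s := by rw [hkJ, hkA]; push_cast; ring
      have hmm : J j = A j + sgn e * s := by
        rcases sgn_cases e with he | he
        · have h2 : 0 < ((kJ - kA : ℤ) : ℝ) * s := by
            rw [← hm]
            rw [hyj, he] at h1
            rw [abs_le] at h1
            nlinarith [h1.1, h1.2]
          have h3 : ((kJ - kA : ℤ) : ℝ) * s < 2 * s := by
            rw [← hm]
            rw [hyj, he] at h1
            rw [abs_le] at h1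
            nlinarith [h1.1, h1.2]
          have := int_eq_one hs _ h2 h3
          rw [he, one_mul]
          have : J j - A j = s := by rw [hm, this]; push_cast; ring
          linarith
        · have h2 : 0 < ((kA - kJ : ℤ) : ℝ) * s := by
            have hm' : A j - J j = ((kA - kJ : ℤ) : ℝ) * s := by rw [hkJ, hkA]; push_cast; ring
            rw [← hm']
            rw [hyj, he] at h1
            rw [abs_le] at h1
            nlinarith [h1.1, h1.2]
          have h3 : ((kA - kJ : ℤ) : ℝ) * s < 2 * s := by
            have hm' : A j - J j = ((kA - kJ : ℤ) : ℝ) * s := by rw [hkJ, hkA]; push_cast; ring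
            rw [← hm']
            rw [hyj, he] at h1
            rw [abs_le] at h1
            nlinarith [h1.1, h1.2]
          have h4 := int_eq_one hs _ h2 h3
          have h5 : A j - J j = s := by
            rw [show A j - J j = ((kA - kJ : ℤ) : ℝ) * s by rw [hkJ, hkA]; push_cast; ring, h4]
            push_cast; ring
          rw [he]; linarith
      rw [hmm]
      show _ = (if j = j then A j + sgn e * s else A j)
      rw [if_pos rfl]
    · -- coordinate j ≠ t
      have hyj : y j = x j := by
        rw [hy, single_add_apply, if_neg hj, add_zero]
      have h1 : |y j - J j| ≤ s/2 := hyJ j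
      have h2 : |x j - A j| < s/2 := hx.2 j hj
      have h3 : |J j - A j| < s := by
        rw [hyj] at h1
        calc |J j - A j| = |-(x j - J j) + (x j - A j)| := by ring_nf
          _ ≤ |-(x j - J j)| + |x j - A j| := abs_add_le _ _
          _ = |x j - J j| + |x j - A j| := by rw [abs_neg]
          _ < s/2 + s/2 := add_lt_add_of_le_of_lt h1 h2
          _ = s := by ring
      have := lat_coord_eq hs (hJlat j) (hAlat j) h3
      rw [this]
      show _ = (if j = t then A j + sgn e * s else A j)
      rw [if_neg hj]
  exact hnb (hJeq ▸ hJU)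

end PerimProof

namespace PerimProof
variable {d : ℕ} {s : ℝ}

lemma no_half (n : ℤ) (σ : ℝ) (hσ : σ = 1 ∨ σ = -1) : ¬ (|(n : ℝ) + σ/2| < 1/2) := by
  intro h
  rw [abs_lt] at h
  rcases hσ with h1 | h1 <;> subst h1
  · have h2 : (-1 : ℝ) < n := by linarith [h.1]
    have h3 : (n : ℝ) < 0 := by linarith [h.2]
    have h2' : (-1 : ℤ) < n := by exact_mod_cast h2
    have h3' : n < 0 := by exact_mod_cast h3
    omega
  · have h2 : (0 : ℝ) < n := by linarith [h.1]
    have h3 : (n : ℝ) < 1 := by linarith [h.2]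
    have h2' : (0 : ℤ) < n := by exact_mod_cast h2
    have h3' : n < 1 := by exact_mod_cast h3
    omega

lemma openFace_overlap (hs : 0 < s) {A A' : EuclideanSpace ℝ (Fin d)} {t t' : Fin d} {e e' : Bool}
    (hA : ∀ i, ∃ k : ℤ, A i = k * s) (hA' : ∀ i, ∃ k : ℤ, A' i = k * s)
    (h : (openFace s A t e ∩ openFace s A' t' e').Nonempty) :
    (A = A' ∧ t = t' ∧ e = e') ∨ A' = nb s A t e := by
  obtain ⟨y, hy1, hy2⟩ := h
  -- first, t = t'
  have htt : t = t' := by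
    by_contra htne
    obtain ⟨a, ha⟩ := hA t'
    obtain ⟨b, hb⟩ := hA' t'
    have h1 : y t' = A' t' + sgn e' * (s/2) := hy2.1
    have h2 : |y t' - A t'| < s/2 := hy1.2 t' (fun hh => htne hh.symm)
    rw [h1, ha, hb] at h2
    have h3 : |((b - a : ℤ) : ℝ) + sgn e' / 2| < 1/2 := by
      have heq : (b : ℝ) * s + sgn e' * (s/2) - a * s = (((b - a : ℤ) : ℝ) + sgn e' / 2) * s := by
        push_cast; ring
      rw [heq, abs_mul, abs_of_pos hs] at h2
      calc |((b - a : ℤ) : ℝ) + sgn e' / 2| = |((b - a : ℤ) : ℝ) + sgn e' / 2| * s / s := by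
            field_simp
        _ < (s/2) / s := by gcongr
        _ = 1/2 := by field_simp
    exact no_half _ _ (sgn_cases e') h3
  subst htt
  -- coordinates other than t agree
  have hother : ∀ j, j ≠ t → A j = A' j := by
    intro j hj
    apply lat_coord_eq hs (hA j) (hA' j)
    have h1 := hy1.2 j hj
    have h2 := hy2.2 j hj
    calc |A j - A' j| = |-(y j - A j) + (y j - A' j)| := by ring_nf
      _ ≤ |-(y j - A j)| + |y j - A' j| := abs_add_le _ _
      _ = |y j - A j| + |y j - A' j| := by rw [abs_neg]
      _ < s/2 + s/2 := add_lt_add h1 h2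
      _ = s := by ring
  have hts : A t + sgn e * (s/2) = A' t + sgn e' * (s/2) := by
    rw [← hy1.1, hy2.1]
  by_cases hee : e = e'
  · left
    subst hee
    refine ⟨funext_eucl fun j => ?_, rfl, rfl⟩
    by_cases hj : j = t
    · subst hj; linarith [hts]
    · exact hother j hj
  · right
    have hsgn : sgn e' = - sgn e := by
      cases e <;> cases e' <;> simp_all [sgn]
    apply funext_eucl
    intro j
    show A' j = (if j = t then A j + sgn e * s else A j)
    by_cases hj : j = t
    · subst hj
      rw [if_pos rfl]
      rw [hsgn] at hts
      linarith
    · rw [if_neg hj]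
      exact (hother j hj).symm

end PerimProof

namespace PerimProof
variable {n : ℕ} {s : ℝ}

/-- delete coordinate t -/
def del (t : Fin (n+1)) (x : EuclideanSpace ℝ (Fin (n+1))) : Fin n → ℝ :=
  fun j => x (t.succAbove j)

/-- insert value c at coordinate t -/
def ins (t : Fin (n+1)) (c : ℝ) (z : Fin n → ℝ) : EuclideanSpace ℝ (Fin (n+1)) :=
  WithLp.toLp 2 (t.insertNth c z)

lemma del_lipschitz (t : Fin (n+1)) : LipschitzWith 1 (del t) := by
  apply LipschitzWith.of_dist_le_mul
  intro x y
  rw [NNReal.coe_one, one_mul]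
  rw [dist_pi_le_iff dist_nonneg]
  intro j
  rw [Real.dist_eq]
  exact dist_coord_le (t.succAbove j) x y

lemma ins_lipschitz (t : Fin (n+1)) (c : ℝ) : LipschitzWith (n+1 : ℝ≥0) (ins t c) := by
  apply LipschitzWith.of_dist_le_mul
  intro x y
  rw [EuclideanSpace.dist_eq]
  have hsum : ∑ i : Fin (n+1), dist (ins t c x i) (ins t c y i) ^ 2
      = ∑ j : Fin n, dist (x j) (y j) ^ 2 := by
    rw [Fin.sum_univ_succAbove _ t]
    simp only [ins, WithLp.ofLp_toLp, Fin.insertNth_apply_same, Fin.insertNth_apply_succAbove]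
    simp [dist_self]
  rw [hsum]
  have hbound : ∑ j : Fin n, dist (x j) (y j) ^ 2 ≤ (n : ℝ) * (dist x y) ^ 2 := by
    calc ∑ j : Fin n, dist (x j) (y j) ^ 2 ≤ ∑ _j : Fin n, (dist x y) ^ 2 :=
          Finset.sum_le_sum fun j _ => pow_le_pow_left₀ dist_nonneg (dist_le_pi_dist x y j) 2
      _ = (n : ℝ) * (dist x y) ^ 2 := by simp [Finset.sum_const]
  calc Real.sqrt (∑ j : Fin n, dist (x j) (y j) ^ 2) ≤ Real.sqrt ((n : ℝ) * (dist x y) ^ 2) :=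
        Real.sqrt_le_sqrt hbound
    _ = Real.sqrt (n : ℝ) * dist x y := by
        rw [Real.sqrt_mul (Nat.cast_nonneg n), Real.sqrt_sq dist_nonneg]
    _ ≤ ((n+1 : ℝ≥0) : ℝ) * dist x y := by
        apply mul_le_mul_of_nonneg_right _ dist_nonneg
        rw [show ((n+1 : ℝ≥0) : ℝ) = ((n : ℝ) + 1) by push_cast; ring]
        calc Real.sqrt (n : ℝ) ≤ Real.sqrt (((n : ℝ) + 1)^2) := by
              apply Real.sqrt_le_sqrt; nlinarith [Nat.cast_nonneg (α := ℝ) n]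
          _ = (n : ℝ) + 1 := Real.sqrt_sq (by positivity)

lemma abs_lt_iff_Ioo {a c r : ℝ} : |a - c| < r ↔ a ∈ Ioo (c - r) (c + r) := by
  rw [abs_lt, mem_Ioo]; constructor <;> intro h <;> constructor <;> linarith [h.1, h.2]

lemma abs_le_iff_Icc {a c r : ℝ} : |a - c| ≤ r ↔ a ∈ Icc (c - r) (c + r) := by
  rw [abs_le, mem_Icc]; constructor <;> intro h <;> constructor <;> linarith [h.1, h.2]

lemma del_image_openFace (hs : 0 < s) (A : EuclideanSpace ℝ (Fin (n+1))) (t : Fin (n+1)) (e : Bool) :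
    del t '' openFace s A t e =
      Set.pi Set.univ (fun j => Ioo (A (t.succAbove j) - s/2) (A (t.succAbove j) + s/2)) := by
  ext z
  constructor
  · rintro ⟨y, hy, rfl⟩
    intro j _
    exact abs_lt_iff_Ioo.1 (hy.2 (t.succAbove j) (Fin.succAbove_ne t j))
  · intro hz
    refine ⟨ins t (A t + sgn e * (s/2)) z, ⟨?_, ?_⟩, ?_⟩
    · exact Fin.insertNth_apply_same (α := fun _ => ℝ) t _ z
    · intro j hj
      obtain ⟨j', rfl⟩ := Fin.exists_succAbove_eq hj
      have h5 : ins t (A t + sgn e * (s/2)) z (t.succAbove j') = z j' :=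
        Fin.insertNth_apply_succAbove (α := fun _ => ℝ) t _ z j'
      rw [h5]
      exact abs_lt_iff_Ioo.2 (hz j' (mem_univ _))
    · funext j
      exact Fin.insertNth_apply_succAbove (α := fun _ => ℝ) t _ z j

lemma hausdorff_eq_volume_pi :
    (μH[(n : ℝ)] : Measure (Fin n → ℝ)) = volume := by
  have := MeasureTheory.hausdorffMeasure_pi_real (ι := Fin n)
  rwa [Fintype.card_fin] at this

lemma box_volume_Ioo (hs : 0 < s) (a : Fin n → ℝ) :
    (volume : Measure (Fin n → ℝ)) (Set.pi Set.univ fun j => Ioo (a j - s/2) (a j + s/2))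
      = ENNReal.ofReal (s ^ n) := by
  rw [volume_pi_pi]
  have h : ∀ j : Fin n, volume (Ioo (a j - s/2) (a j + s/2)) = ENNReal.ofReal s := by
    intro j; rw [Real.volume_Ioo]; ring_nf
  simp only [h]
  rw [Finset.prod_const, Finset.card_univ, Fintype.card_fin, ← ENNReal.ofReal_pow hs.le]

lemma box_volume_Icc (hs : 0 < s) (a : Fin n → ℝ) :
    (volume : Measure (Fin n → ℝ)) (Set.pi Set.univ fun j => Icc (a j - s/2) (a j + s/2))
      = ENNReal.ofReal (s ^ n) := by
  rw [volume_pi_pi]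
  have h : ∀ j : Fin n, volume (Icc (a j - s/2) (a j + s/2)) = ENNReal.ofReal s := by
    intro j; rw [Real.volume_Icc]; ring_nf
  simp only [h]
  rw [Finset.prod_const, Finset.card_univ, Fintype.card_fin, ← ENNReal.ofReal_pow hs.le]

lemma openFace_measure_ge (hs : 0 < s) (A : EuclideanSpace ℝ (Fin (n+1))) (t : Fin (n+1)) (e : Bool) :
    ENNReal.ofReal (s ^ n) ≤ μH[(n : ℝ)] (openFace s A t e) := by
  have h1 := (del_lipschitz (n := n) t).hausdorffMeasure_image_le
    (by positivity : (0:ℝ) ≤ (n:ℝ)) (openFace s A t e)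
  rw [del_image_openFace hs A t e] at h1
  have h2 : μH[(n : ℝ)] (Set.pi Set.univ fun j => Ioo (A (t.succAbove j) - s/2) (A (t.succAbove j) + s/2))
      = ENNReal.ofReal (s ^ n) := by
    rw [hausdorff_eq_volume_pi, box_volume_Ioo hs]
  rw [h2] at h1
  simpa using h1

lemma closedFace_subset_image (A : EuclideanSpace ℝ (Fin (n+1))) (t : Fin (n+1)) (e : Bool) :
    closedFace s A t e ⊆ ins t (A t + sgn e * (s/2)) ''
      (Set.pi Set.univ fun j => Icc (A (t.succAbove j) - s/2) (A (t.succAbove j) + s/2)) := by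
  intro y hy
  refine ⟨del t y, fun j _ => abs_le_iff_Icc.1 (hy.2 (t.succAbove j)), ?_⟩
  refine (WithLp.ext_iff 2).2 (funext fun i => ?_)
  by_cases hi : i = t
  · subst hi
    have h5 : ins i (A i + sgn e * (s/2)) (del i y) i = A i + sgn e * (s/2) :=
      Fin.insertNth_apply_same (α := fun _ => ℝ) i _ _
    rw [h5, hy.1]
  · obtain ⟨j', rfl⟩ := Fin.exists_succAbove_eq hi
    exact Fin.insertNth_apply_succAbove (α := fun _ => ℝ) t _ _ j'

lemma closedFace_measure_le (hs : 0 < s) (A : EuclideanSpace ℝ (Fin (n+1))) (t : Fin (n+1)) (e : Bool) :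
    μH[(n : ℝ)] (closedFace s A t e) ≤ ENNReal.ofReal (((n:ℝ)+1)^n * s ^ n) := by
  have h1 := measure_mono (μ := μH[(n : ℝ)]) (closedFace_subset_image (s := s) A t e)
  have h2 := (ins_lipschitz (n := n) t (A t + sgn e * (s/2))).hausdorffMeasure_image_le
    (by positivity : (0:ℝ) ≤ (n:ℝ))
    (Set.pi Set.univ fun j => Icc (A (t.succAbove j) - s/2) (A (t.succAbove j) + s/2))
  have h3 : μH[(n : ℝ)] (Set.pi Set.univ fun j => Icc (A (t.succAbove j) - s/2) (A (t.succAbove j) + s/2))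
      = ENNReal.ofReal (s ^ n) := by
    rw [hausdorff_eq_volume_pi, box_volume_Icc hs]
  rw [h3] at h2
  refine le_trans (le_trans h1 h2) ?_
  have h4 : ((n+1 : ℝ≥0) : ℝ≥0∞) ^ (n : ℝ) = ENNReal.ofReal (((n:ℝ)+1)^n) := by
    rw [ENNReal.rpow_natCast, ← ENNReal.coe_pow, ← ENNReal.ofReal_coe_nnreal]
    congr 1
  rw [h4, ← ENNReal.ofReal_mul (by positivity)]

lemma openFace_measurable (A : EuclideanSpace ℝ (Fin (n+1))) (t : Fin (n+1)) (e : Bool) :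
    MeasurableSet (openFace s A t e) := by
  have heq : openFace s A t e = {y : EuclideanSpace ℝ (Fin (n+1)) | y t = A t + sgn e * (s/2)} ∩
      ⋂ (j : Fin (n+1)), ⋂ (_ : j ≠ t), {y : EuclideanSpace ℝ (Fin (n+1)) | |y j - A j| < s/2} := by
    ext y
    simp only [openFace, mem_setOf_eq, mem_inter_iff, mem_iInter]
  rw [heq]
  apply MeasurableSet.inter
  · exact (isClosed_eq (cont_coord t) continuous_const).measurableSet
  · exact MeasurableSet.iInter fun j => MeasurableSet.iInter fun _ =>
      (isOpen_lt ((cont_coord j).sub continuous_const).abs continuous_const).measurableSet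

end PerimProof
namespace PerimProof
variable {d : ℕ} {s : ℝ}

lemma lat_abs_eq_s (hs : 0 < s) {a b : ℝ} (ha : ∃ k : ℤ, a = k * s) (hb : ∃ k : ℤ, b = k * s)
    (hle : |a - b| ≤ s) (hne : a ≠ b) : |a - b| = s := by
  rcases ha with ⟨k, rfl⟩; rcases hb with ⟨m, rfl⟩
  have hkm : k ≠ m := fun h => hne (by rw [h])
  have heq : |(k : ℝ) * s - m * s| = |((k - m : ℤ) : ℝ)| * s := by
    rw [← sub_mul, abs_mul, abs_of_pos hs]
    push_cast
    ring_nf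
  rw [heq] at hle ⊢
  have h2 : (1 : ℝ) ≤ |((k - m : ℤ) : ℝ)| := by
    have : (1 : ℤ) ≤ |k - m| := by rw [abs_sub_comm]; exact Int.one_le_abs (by omega)
    calc (1:ℝ) ≤ (|k - m| : ℤ) := by exact_mod_cast this
      _ = |((k - m : ℤ) : ℝ)| := by push_cast; rfl
  have h3 : |((k - m : ℤ) : ℝ)| ≤ 1 := by
    by_contra hcon
    push_neg at hcon
    nlinarith
  have : |((k - m : ℤ) : ℝ)| = 1 := le_antisymm h3 h2
  rw [this, one_mul]

lemma lat_close3 (hs : 0 < s) {a b : ℝ} (ha : ∃ k : ℤ, a = k * s) (hb : ∃ k : ℤ, b = k * s)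
    (hle : |a - b| ≤ s) : a = b - s ∨ a = b ∨ a = b + s := by
  rcases ha with ⟨k, rfl⟩; rcases hb with ⟨m, rfl⟩
  have heq : |(k : ℝ) * s - m * s| = |((k - m : ℤ) : ℝ)| * s := by
    rw [← sub_mul, abs_mul, abs_of_pos hs]; push_cast; ring_nf
  rw [heq] at hle
  have h3 : |((k - m : ℤ) : ℝ)| ≤ 1 := by
    by_contra hcon
    push_neg at hcon
    nlinarith
  have h4 : |k - m| ≤ 1 := by
    have : ((|k - m| : ℤ) : ℝ) ≤ 1 := by rw [show ((|k - m| : ℤ) : ℝ) = |((k - m : ℤ) : ℝ)| by push_cast; rfl]; exact h3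
    exact_mod_cast this
  rw [abs_le] at h4
  have : k = m - 1 ∨ k = m ∨ k = m + 1 := by omega
  rcases this with h | h | h
  · left; subst h; push_cast; ring
  · right; left; subst h; rfl
  · right; right; subst h; push_cast; ring

lemma frontier_cube_subset (hs : 0 < s) (K : EuclideanSpace ℝ (Fin d)) :
    frontier (latticeCube d s K) ⊆
      ⋃ p ∈ (Finset.univ : Finset (Fin d × Bool)), closedFace s K p.1 p.2 := by
  intro y hy
  have hyc : y ∈ latticeCube d s K := (lc_closed K).closure_eq ▸ frontier_subset_closure hy
  have hyint : y ∉ interior (latticeCube d s K) := by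
    rw [frontier, mem_diff] at hy; exact hy.2
  have hex : ∃ i, ¬ |y i - K i| < s/2 := by
    by_contra hcon
    push_neg at hcon
    exact hyint (lc_interior K y hcon)
  obtain ⟨i, hi⟩ := hex
  push_neg at hi
  have heq : |y i - K i| = s/2 := le_antisymm (hyc i) hi
  rcases (abs_eq (by linarith : (0:ℝ) ≤ s/2)).1 heq with h | h
  · exact mem_biUnion (Finset.mem_univ (i, true)) ⟨by show y i = K i + sgn true * (s/2); simp [sgn]; linarith, hyc⟩
  · exact mem_biUnion (Finset.mem_univ (i, false)) ⟨by show y i = K i + sgn false * (s/2); simp [sgn]; linarith, hyc⟩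

end PerimProof

namespace PerimProof
variable {d : ℕ} {s : ℝ}

lemma exists_face_near (hs : 0 < s) (U : Finset (EuclideanSpace ℝ (Fin d)))
    (hU : ∀ J ∈ U, ∀ i, ∃ k : ℤ, J i = k * s)
    {K : EuclideanSpace ℝ (Fin d)} (hKlat : ∀ i, ∃ k : ℤ, K i = k * s) (hKU : K ∉ U)
    {J : EuclideanSpace ℝ (Fin d)} (hJU : J ∈ U)
    (hclose : ∀ i, |J i - K i| ≤ s) :
    ∃ p : EuclideanSpace ℝ (Fin d) × Fin d × Bool,
      (p.1 ∈ U ∧ nb s p.1 p.2.1 p.2.2 ∉ U) ∧ ∀ i, |K i - p.1 i| ≤ s := by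
  classical
  set P : ℕ → EuclideanSpace ℝ (Fin d) := fun m => WithLp.toLp 2 (fun i => if (i : ℕ) < m then J i else K i)
    with hPdef
  have hP0 : P 0 = K := funext_eucl fun i => by simp [hPdef]
  have hPd : P d = J := funext_eucl fun i => by simp [hPdef, i.isLt]
  have hex : ∃ m, P m ∈ U := ⟨d, by rw [hPd]; exact hJU⟩
  set m₀ := Nat.find hex with hm₀def
  have hm₀mem : P m₀ ∈ U := Nat.find_spec hex
  have hm₀pos : m₀ ≠ 0 := fun h => hKU (by rw [← hP0, ← h]; exact hm₀mem)
  have hm₀le : m₀ ≤ d := Nat.find_le (by rw [hPd]; exact hJU)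
  have hprev : P (m₀ - 1) ∉ U := Nat.find_min hex (by omega)
  set i₀ : Fin d := ⟨m₀ - 1, by omega⟩ with hi₀def
  have hv : (i₀ : ℕ) = m₀ - 1 := rfl
  have hAi₀ : P m₀ i₀ = J i₀ := by
    show (if (i₀ : ℕ) < m₀ then J i₀ else K i₀) = J i₀
    rw [if_pos (by omega)]
  have hprevi₀ : P (m₀ - 1) i₀ = K i₀ := by
    show (if (i₀ : ℕ) < m₀ - 1 then J i₀ else K i₀) = K i₀
    rw [if_neg (by omega)]
  have hdiff : ∀ i : Fin d, i ≠ i₀ → P m₀ i = P (m₀ - 1) i := by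
    intro i hi
    have hval : (i : ℕ) ≠ m₀ - 1 := fun h => hi (Fin.ext h)
    show (if (i : ℕ) < m₀ then J i else K i) = (if (i : ℕ) < m₀ - 1 then J i else K i)
    by_cases h : (i : ℕ) < m₀ - 1
    · rw [if_pos h, if_pos (by omega)]
    · rw [if_neg h, if_neg (by omega)]
  have hJKne : J i₀ ≠ K i₀ := by
    intro h
    apply hprev
    have : P m₀ = P (m₀ - 1) := by
      apply funext_eucl
      intro i
      by_cases hi : i = i₀
      · subst hi; rw [hAi₀, hprevi₀, h]
      · exact hdiff i hi
    rw [← this]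
    exact hm₀mem
  have hAlat : ∀ i, ∃ k : ℤ, P m₀ i = k * s := by
    intro i
    show ∃ k : ℤ, (if (i : ℕ) < m₀ then J i else K i) = k * s
    by_cases h : (i : ℕ) < m₀
    · rw [if_pos h]; exact hU J hJU i
    · rw [if_neg h]; exact hKlat i
  have habs : |J i₀ - K i₀| = s :=
    lat_abs_eq_s hs (hU J hJU i₀) (hKlat i₀) (hclose i₀) hJKne
  have hclose' : ∀ i, |K i - P m₀ i| ≤ s := by
    intro i
    show |K i - (if (i : ℕ) < m₀ then J i else K i)| ≤ s
    by_cases h : (i : ℕ) < m₀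
    · rw [if_pos h, abs_sub_comm]; exact hclose i
    · rw [if_neg h]; simp; linarith
  rcases (abs_eq hs.le).1 habs with hcase | hcase
  · -- J i₀ - K i₀ = s, so K i₀ = J i₀ - s : take e = false
    refine ⟨⟨P m₀, i₀, false⟩, ⟨hm₀mem, ?_⟩, hclose'⟩
    have : nb s (P m₀) i₀ false = P (m₀ - 1) := by
      apply funext_eucl
      intro i
      show (if i = i₀ then P m₀ i + sgn false * s else P m₀ i) = P (m₀ - 1) i
      by_cases hi : i = i₀
      · subst hi; rw [if_pos rfl, hAi₀, hprevi₀]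
        simp only [sgn, Bool.false_eq_true, if_false]
        linarith
      · rw [if_neg hi]; exact hdiff i hi
    rw [this]
    exact hprev
  · -- J i₀ - K i₀ = -s : take e = true
    refine ⟨⟨P m₀, i₀, true⟩, ⟨hm₀mem, ?_⟩, hclose'⟩
    have : nb s (P m₀) i₀ true = P (m₀ - 1) := by
      apply funext_eucl
      intro i
      show (if i = i₀ then P m₀ i + sgn true * s else P m₀ i) = P (m₀ - 1) i
      by_cases hi : i = i₀
      · subst hi; rw [if_pos rfl, hAi₀, hprevi₀]
        simp only [sgn, if_true]
        linarith
      · rw [if_neg hi]; exact hdiff i hi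
    rw [this]
    exact hprev

end PerimProof

namespace PerimProof
variable {d : ℕ} {s : ℝ}

lemma tri_key (hs : 0 < s) {c : ℝ} : ∀ x : ℝ, (x = c - s ∨ x = c ∨ x = c + s) →
    x = c - s + s * ((if x < c then (0:Fin 3) else if x = c then 1 else 2) : Fin 3).val := by
  intro x hx
  rcases hx with h|h|h <;> subst h
  · rw [if_pos (by linarith)]
    norm_num
  · rw [if_neg (lt_irrefl _), if_pos rfl]
    norm_num
  · rw [if_neg (by linarith : ¬ c + s < c), if_neg (by intro h; linarith)]
    norm_num
    ring

lemma card_B_le (hd : 0 < d) (hs : 0 < s) (U B : Finset (EuclideanSpace ℝ (Fin d)))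
    (hU : ∀ J ∈ U, ∀ i, ∃ k : ℤ, J i = k * s)
    (hB : ∀ J, J ∈ B ↔ ((∀ i, ∃ k : ℤ, J i = k * s) ∧ J ∉ U ∧
      ∃ J' ∈ U, (frontier (latticeCube d s J') ∩ frontier (latticeCube d s J)).Nonempty))
    (Fc : Finset (EuclideanSpace ℝ (Fin d) × Fin d × Bool))
    (hFc : ∀ p, p ∈ Fc ↔ (p.1 ∈ U ∧ nb s p.1 p.2.1 p.2.2 ∉ U)) :
    B.card ≤ 3 ^ d * Fc.card := by
  classical
  have hchoice : ∀ K ∈ B, ∃ p : EuclideanSpace ℝ (Fin d) × Fin d × Bool,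
      p ∈ Fc ∧ ∀ i, |K i - p.1 i| ≤ s := by
    intro K hK
    obtain ⟨hKlat, hKU, J', hJ'U, x, hx1, hx2⟩ := (hB K).1 hK
    have hxJ : x ∈ latticeCube d s J' := (lc_closed J').closure_eq ▸ frontier_subset_closure hx1
    have hxK : x ∈ latticeCube d s K := (lc_closed K).closure_eq ▸ frontier_subset_closure hx2
    have hclose : ∀ i, |J' i - K i| ≤ s := by
      intro i
      calc |J' i - K i| = |-(x i - J' i) + (x i - K i)| := by ring_nf
        _ ≤ |-(x i - J' i)| + |x i - K i| := abs_add_le _ _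
        _ = |x i - J' i| + |x i - K i| := by rw [abs_neg]
        _ ≤ s/2 + s/2 := add_le_add (hxJ i) (hxK i)
        _ = s := by ring
    obtain ⟨p, ⟨hp1, hp2⟩, hp3⟩ := exists_face_near hs U hU hKlat hKU hJ'U hclose
    exact ⟨p, (hFc p).2 ⟨hp1, hp2⟩, hp3⟩
  have hNE : Nonempty (EuclideanSpace ℝ (Fin d) × Fin d × Bool) := ⟨⟨0, ⟨0, hd⟩, true⟩⟩
  choose! f hf1 hf2 using hchoice
  apply Finset.card_le_mul_card_image_of_maps_to hf1 (3 ^ d)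
  intro p hp
  -- fiber bound via injection into Fin d → Fin 3
  have hp1 : p.1 ∈ U := ((hFc p).1 hp).1
  set g : EuclideanSpace ℝ (Fin d) → (Fin d → Fin 3) :=
    fun K i => if K i < p.1 i then 0 else if K i = p.1 i then 1 else 2 with hg
  have hinj : Set.InjOn g ↑(B.filter fun K => f K = p) := by
    intro K hKmem K' hK'mem hgKK'
    simp only [Finset.coe_filter, mem_setOf_eq] at hKmem hK'mem
    have hKB := hKmem.1; have hKp := hKmem.2
    have hK'B := hK'mem.1; have hK'p := hK'mem.2
    have hKlat := ((hB K).1 hKB).1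
    have hK'lat := ((hB K').1 hK'B).1
    have hplat := hU p.1 hp1
    apply funext_eucl
    intro i
    have h3K : K i = p.1 i - s ∨ K i = p.1 i ∨ K i = p.1 i + s :=
      lat_close3 hs (hKlat i) (hplat i) (by have := hf2 K hKB i; rwa [hKp] at this)
    have h3K' : K' i = p.1 i - s ∨ K' i = p.1 i ∨ K' i = p.1 i + s :=
      lat_close3 hs (hK'lat i) (hplat i) (by have := hf2 K' hK'B i; rwa [hK'p] at this)
    have hgi : g K i = g K' i := congrFun hgKK' i
    rw [tri_key hs (K i) h3K, tri_key hs (K' i) h3K']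
    rw [hg] at hgi
    simp only at hgi
    rw [hgi]
  have hfiber := Finset.card_le_card_of_injOn g
    (fun K _ => Finset.mem_univ (g K)) hinj
  calc (B.filter fun K => f K = p).card ≤ (Finset.univ : Finset (Fin d → Fin 3)).card := hfiber
    _ = 3 ^ d := by simp [Finset.card_univ]


noncomputable def Cdim (n : ℕ) : ℝ := 3^(n+1) + 2*((n:ℝ)+1)*((n:ℝ)+1)^(n+1)

lemma Cdim_pos (n : ℕ) : 0 < Cdim n := by unfold Cdim; positivity

lemma Cdim_ge3 (n : ℕ) : (3:ℝ)^(n+1) ≤ Cdim n := by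
  unfold Cdim
  have : (0:ℝ) ≤ 2*((n:ℝ)+1)*((n:ℝ)+1)^(n+1) := by positivity
  linarith

lemma Cdim_ge2 (n : ℕ) : 2*((n:ℝ)+1)*((n:ℝ)+1)^n ≤ Cdim n := by
  unfold Cdim
  have h1 : ((n:ℝ)+1)^n ≤ ((n:ℝ)+1)^(n+1) := by
    apply pow_le_pow_right₀ (by linarith [Nat.cast_nonneg (α := ℝ) n]) (by omega)
  have h2 : (0:ℝ) ≤ 3^(n+1) := by positivity
  nlinarith [Nat.cast_nonneg (α := ℝ) n]

end PerimProof

/-- For a finite union of lattice cubes `E(U) = ⋃_{J∈U} Q_s(J)`, the perimeter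
(the `(d-1)`-dimensional Hausdorff measure of the topological boundary) is
comparable, with dimensional constants, to `#(∂U) s^{d-1}`, where `∂U` is the
outer boundary of `U` in the lattice `sℤ^d`. -/
theorem perimeter_comparable_boundary_card (d : ℕ) (hd : 2 ≤ d) :
    ∃ C : ℝ, 0 < C ∧ ∀ s : ℝ, 0 < s →
      ∀ U B : Finset (EuclideanSpace ℝ (Fin d)),
        (∀ J ∈ U, ∀ i, ∃ k : ℤ, J i = k * s) →
        (∀ J, J ∈ B ↔ ((∀ i, ∃ k : ℤ, J i = k * s) ∧ J ∉ U ∧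
          ∃ J' ∈ U, (frontier (latticeCube d s J') ∩ frontier (latticeCube d s J)).Nonempty)) →
        ENNReal.ofReal (C⁻¹ * B.card * s ^ (d - 1)) ≤
            (μH[((d : ℝ) - 1)] (frontier (⋃ J ∈ U, latticeCube d s J))) ∧
          (μH[((d : ℝ) - 1)] (frontier (⋃ J ∈ U, latticeCube d s J))) ≤
            ENNReal.ofReal (C * B.card * s ^ (d - 1)) := by
  classical
  open PerimProof in
  obtain ⟨n, rfl⟩ : ∃ n, d = n + 1 := ⟨d - 1, by omega⟩
  refine ⟨Cdim n, Cdim_pos n, ?_⟩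
  intro s hs U B hU hB
  have hexp : ((n+1 : ℕ) : ℝ) - 1 = (n : ℝ) := by push_cast; ring
  rw [hexp]
  simp only [Nat.add_sub_cancel]
  set E := ⋃ J ∈ U, latticeCube (n+1) s J with hE
  -- the set of boundary faces
  set Fc : Finset (EuclideanSpace ℝ (Fin (n+1)) × Fin (n+1) × Bool) :=
    (U ×ˢ (Finset.univ : Finset (Fin (n+1) × Bool))).filter
      (fun p => nb s p.1 p.2.1 p.2.2 ∉ U) with hFcdef
  have hFc : ∀ p, p ∈ Fc ↔ (p.1 ∈ U ∧ nb s p.1 p.2.1 p.2.2 ∉ U) := by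
    intro p
    rw [hFcdef, Finset.mem_filter, Finset.mem_product]
    constructor
    · rintro ⟨⟨h1, _⟩, h2⟩; exact ⟨h1, h2⟩
    · rintro ⟨h1, h2⟩; exact ⟨⟨h1, Finset.mem_univ _⟩, h2⟩
  constructor
  · -- LOWER BOUND
    have hcard : B.card ≤ 3 ^ (n+1) * Fc.card := card_B_le (by omega) hs U B hU hB Fc hFc
    have hdisj : (↑Fc : Set (EuclideanSpace ℝ (Fin (n+1)) × Fin (n+1) × Bool)).PairwiseDisjoint
        (fun p => openFace s p.1 p.2.1 p.2.2) := by
      intro p hp q hq hpq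
      rw [Function.onFun]
      by_contra hcon
      rw [Set.not_disjoint_iff_nonempty_inter] at hcon
      have hpU : p.1 ∈ U := ((hFc p).1 (Finset.mem_coe.1 hp)).1
      have hqU : q.1 ∈ U := ((hFc q).1 (Finset.mem_coe.1 hq)).1
      have hpnb : nb s p.1 p.2.1 p.2.2 ∉ U := ((hFc p).1 (Finset.mem_coe.1 hp)).2
      rcases openFace_overlap hs (hU p.1 hpU) (hU q.1 hqU) hcon with ⟨h1, h2, h3⟩ | h1
      · exact hpq (Prod.ext h1 (Prod.ext h2 h3))
      · rw [h1] at hqU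
        exact hpnb hqU
    have hmeas : ∀ p ∈ Fc, MeasurableSet (openFace s p.1 p.2.1 p.2.2) :=
      fun p _ => openFace_measurable p.1 p.2.1 p.2.2
    have hsub : (⋃ p ∈ Fc, openFace s p.1 p.2.1 p.2.2) ⊆ frontier E :=
      iUnion₂_subset fun p hp => openFace_subset_frontier hs U hU
        ((hFc p).1 hp).1 ((hFc p).1 hp).2
    have hreal : (Cdim n)⁻¹ * B.card * s ^ n ≤ (Fc.card : ℝ) * s ^ n := by
      apply mul_le_mul_of_nonneg_right _ (by positivity)
      have hc : (B.card : ℝ) ≤ 3 ^ (n+1) * Fc.card := by exact_mod_cast hcard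
      have h0 : (0:ℝ) < Cdim n := Cdim_pos n
      calc (Cdim n)⁻¹ * B.card ≤ (Cdim n)⁻¹ * (3 ^ (n+1) * Fc.card) := by
            apply mul_le_mul_of_nonneg_left hc (by positivity)
        _ = ((Cdim n)⁻¹ * 3 ^ (n+1)) * Fc.card := by ring
        _ ≤ 1 * Fc.card := by
            apply mul_le_mul_of_nonneg_right _ (Nat.cast_nonneg _)
            rw [inv_mul_le_iff₀ h0, mul_one]
            exact Cdim_ge3 n
        _ = Fc.card := one_mul _
    calc ENNReal.ofReal ((Cdim n)⁻¹ * B.card * s ^ n)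
        ≤ ENNReal.ofReal ((Fc.card : ℝ) * s ^ n) := ENNReal.ofReal_le_ofReal hreal
      _ = (Fc.card : ℝ≥0∞) * ENNReal.ofReal (s ^ n) := by
          rw [ENNReal.ofReal_mul (Nat.cast_nonneg _), ENNReal.ofReal_natCast]
      _ ≤ ∑ p ∈ Fc, μH[(n:ℝ)] (openFace s p.1 p.2.1 p.2.2) := by
          rw [← nsmul_eq_mul]
          exact Finset.card_nsmul_le_sum Fc _ _
            (fun p _ => openFace_measure_ge hs p.1 p.2.1 p.2.2)
      _ = μH[(n:ℝ)] (⋃ p ∈ Fc, openFace s p.1 p.2.1 p.2.2) :=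
          (measure_biUnion_finset hdisj hmeas).symm
      _ ≤ μH[(n:ℝ)] (frontier E) := measure_mono hsub
  · -- UPPER BOUND
    have hperK : ∀ K ∈ B, μH[(n:ℝ)] (frontier (latticeCube (n+1) s K))
        ≤ ((n+1) * 2 : ℕ) • ENNReal.ofReal (((n:ℝ)+1)^n * s ^ n) := by
      intro K _
      calc μH[(n:ℝ)] (frontier (latticeCube (n+1) s K))
          ≤ μH[(n:ℝ)] (⋃ p ∈ (Finset.univ : Finset (Fin (n+1) × Bool)), closedFace s K p.1 p.2) :=
            measure_mono (frontier_cube_subset hs K)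
        _ ≤ ∑ p ∈ (Finset.univ : Finset (Fin (n+1) × Bool)), μH[(n:ℝ)] (closedFace s K p.1 p.2) :=
            measure_biUnion_finset_le _ _
        _ ≤ (Finset.univ : Finset (Fin (n+1) × Bool)).card • ENNReal.ofReal (((n:ℝ)+1)^n * s ^ n) :=
            Finset.sum_le_card_nsmul _ _ _ (fun p _ => closedFace_measure_le hs K p.1 p.2)
        _ = ((n+1) * 2 : ℕ) • ENNReal.ofReal (((n:ℝ)+1)^n * s ^ n) := by
            congr 1
            simp [Finset.card_univ]
    calc μH[(n:ℝ)] (frontier E)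
        ≤ μH[(n:ℝ)] (⋃ K ∈ B, frontier (latticeCube (n+1) s K)) :=
          measure_mono (frontier_subset_B (by omega) hs U B hU hB)
      _ ≤ ∑ K ∈ B, μH[(n:ℝ)] (frontier (latticeCube (n+1) s K)) :=
          measure_biUnion_finset_le _ _
      _ ≤ ∑ _K ∈ B, ((n+1) * 2 : ℕ) • ENNReal.ofReal (((n:ℝ)+1)^n * s ^ n) :=
          Finset.sum_le_sum hperK
      _ = (B.card * ((n+1) * 2) : ℕ) • ENNReal.ofReal (((n:ℝ)+1)^n * s ^ n) := by
          rw [Finset.sum_const, smul_smul]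
      _ ≤ ENNReal.ofReal (Cdim n * B.card * s ^ n) := by
          rw [nsmul_eq_mul, ← ENNReal.ofReal_natCast, ← ENNReal.ofReal_mul (Nat.cast_nonneg _)]
          apply ENNReal.ofReal_le_ofReal
          calc ((B.card * ((n+1) * 2) : ℕ) : ℝ) * (((n:ℝ)+1)^n * s ^ n)
              = (2*((n:ℝ)+1) * ((n:ℝ)+1)^n) * (B.card * s ^ n) := by push_cast; ring
            _ ≤ Cdim n * (B.card * s ^ n) :=
                mul_le_mul_of_nonneg_right (Cdim_ge2 n) (by positivity)
            _ = Cdim n * B.card * s ^ n := by ring
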